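/- Let T be a finite nonempty set of targets, u_t, û_t : [0,1] → ℝ attacker utility functions and v_t : [0,1] → [−1,1] defender utility functions for t ∈ T. Define D^x(t) = exp(u_t(x_t)) / Σ_{i∈T} exp(u_i(x_i)), D̄^x(t) = exp(û_t(x_t)) / Σ_{i∈T} exp(û_i(x_i)), V(x) = Σ_{t∈T} D^x(t)·v_t(x_t) and V̄(x) = Σ_{t∈T} D̄^x(t)·v_t(x_t). Suppose there is ε with 0 ≤ ε ≤ 1/4 such that |û_t(p) − u_t(p)| ≤ ε for all t ∈ T and p ∈ [0,1]. If x' ∈ [0,1]^T satisfies V̄(y) ≤ V̄(x') for all y ∈ [0,1]^T (i.e., x' maximizes the predicted defender utility), then V(y) − V(x') ≤ 8ε for every y ∈ [0,1]^T; that is, the strategy optimizing the predicted utility is 8ε-optimal for the true defender utility. -/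

import Mathlib

open Real Set

/-- The quantal (logit) response attack distribution induced by attacker utilities `u`
under defender strategy `x`. -/
noncomputable def attackDist {T : Type*} [Fintype T]
    (u : T → ℝ → ℝ) (x : T → ℝ) (t : T) : ℝ :=
  Real.exp (u t (x t)) / ∑ i, Real.exp (u i (x i))

/-- The defender's expected utility under strategy `x`, when the attacker with
utilities `u` responds via quantal response and the defender's utility at target `t`
is `v t`. -/
noncomputable def defenderUtil {T : Type*} [Fintype T]
    (u : T → ℝ → ℝ) (v : T → ℝ → ℝ) (x : T → ℝ) : ℝ :=
  ∑ t, attackDist u x t * v t (x t)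

lemma defenderUtil_close {T : Type*} [Fintype T] [Nonempty T]
    (u uh : T → ℝ → ℝ) (v : T → ℝ → ℝ)
    (hv : ∀ t, ∀ p ∈ Set.Icc (0:ℝ) 1, v t p ∈ Set.Icc (-1:ℝ) 1)
    (ε : ℝ) (hε0 : 0 ≤ ε) (hε : ε ≤ 1/4)
    (hu : ∀ t, ∀ p ∈ Set.Icc (0:ℝ) 1, |uh t p - u t p| ≤ ε)
    (x : T → ℝ) (hx : ∀ t, x t ∈ Set.Icc (0:ℝ) 1) :
    |defenderUtil uh v x - defenderUtil u v x| ≤ 4 * ε := by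
  set S : ℝ := ∑ i, Real.exp (u i (x i)) with hSdef
  set Sh : ℝ := ∑ i, Real.exp (uh i (x i)) with hShdef
  have hS : 0 < S := Finset.sum_pos (fun i _ => Real.exp_pos _) Finset.univ_nonempty
  have hSh : 0 < Sh := Finset.sum_pos (fun i _ => Real.exp_pos _) Finset.univ_nonempty
  have hub : ∀ i, Real.exp (uh i (x i)) ≤ Real.exp ε * Real.exp (u i (x i)) := by
    intro i
    rw [← Real.exp_add]
    have := abs_le.1 (hu i _ (hx i))
    exact Real.exp_le_exp.2 (by linarith [this.2])
  have hlb : ∀ i, Real.exp (-ε) * Real.exp (u i (x i)) ≤ Real.exp (uh i (x i)) := by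
    intro i
    rw [← Real.exp_add]
    have := abs_le.1 (hu i _ (hx i))
    exact Real.exp_le_exp.2 (by linarith [this.1])
  have hShub : Sh ≤ Real.exp ε * S := by
    rw [hShdef, hSdef, Finset.mul_sum]
    exact Finset.sum_le_sum fun i _ => hub i
  have hShlb : Real.exp (-ε) * S ≤ Sh := by
    rw [hShdef, hSdef, Finset.mul_sum]
    exact Finset.sum_le_sum fun i _ => hlb i
  -- key scalar inequality: exp ε ≤ (1 + 4ε) * exp (-ε)
  have hE : Real.exp ε ≤ (1 + 4*ε) * Real.exp (-ε) := by
    have h1 : 1 - 2*ε ≤ Real.exp (-2*ε) := by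
      have := Real.add_one_le_exp (-2*ε); linarith
    have h2 : Real.exp (-2*ε) = Real.exp (-ε) * Real.exp (-ε) := by
      rw [← Real.exp_add]; ring_nf
    have h3 : Real.exp ε * Real.exp (-ε) = 1 := by
      rw [← Real.exp_add]; simp
    have h4 : 0 < Real.exp (-ε) := Real.exp_pos _
    have h5 : 0 < Real.exp ε := Real.exp_pos _
    nlinarith [sq_nonneg (Real.exp (-ε)), mul_pos h4 h4]
  -- per-target bound
  have key : ∀ t, |attackDist uh x t - attackDist u x t| ≤ 4 * ε * attackDist u x t := by
    intro t
    unfold attackDist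
    rw [← hSdef, ← hShdef]
    set a : ℝ := Real.exp (uh t (x t)) with hadef
    set c : ℝ := Real.exp (u t (x t)) with hcdef
    have ha : 0 < a := Real.exp_pos _
    have hc : 0 < c := Real.exp_pos _
    have h1 : a ≤ Real.exp ε * c := hub t
    have h2 : Real.exp (-ε) * c ≤ a := hlb t
    have hcross : |a * S - c * Sh| ≤ 4 * ε * (c * Sh) := by
      rw [abs_le]
      constructor
      · -- c * Sh - a * S ≤ 4ε c Sh, using c*Sh ≤ c * exp ε * S, a*S ≥ exp(-ε) c S
        nlinarith [mul_le_mul_of_nonneg_left hShub hc.le,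
          mul_le_mul_of_nonneg_right h2 hS.le,
          mul_le_mul_of_nonneg_right hE (mul_nonneg hc.le hS.le),
          mul_le_mul_of_nonneg_left hShlb (mul_nonneg (by linarith : (0:ℝ) ≤ 4*ε) hc.le)]
      · nlinarith [mul_le_mul_of_nonneg_right h1 hS.le,
          mul_le_mul_of_nonneg_left hShlb hc.le,
          mul_le_mul_of_nonneg_right hE (mul_nonneg hc.le hS.le),
          mul_le_mul_of_nonneg_left hShlb (mul_nonneg (by linarith : (0:ℝ) ≤ 4*ε) hc.le)]
    have e1 : a / Sh - c / S = (a * S - c * Sh) / (Sh * S) := by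
      field_simp
    have e2 : 4 * ε * (c / S) = (4 * ε * (c * Sh)) / (Sh * S) := by
      field_simp
    rw [e1, e2, abs_div, abs_of_pos (mul_pos hSh hS)]
    gcongr
  have hsum1 : ∑ t, attackDist u x t = 1 := by
    unfold attackDist
    rw [← Finset.sum_div, ← hSdef, div_self hS.ne']
  have hD0 : ∀ t, 0 ≤ attackDist u x t := fun t =>
    div_nonneg (Real.exp_pos _).le hS.le
  have hvb : ∀ t, |v t (x t)| ≤ 1 := fun t => abs_le.2 (hv t _ (hx t))
  unfold defenderUtil
  rw [← Finset.sum_sub_distrib]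
  calc |∑ t, (attackDist uh x t * v t (x t) - attackDist u x t * v t (x t))|
      ≤ ∑ t, |attackDist uh x t * v t (x t) - attackDist u x t * v t (x t)| :=
        Finset.abs_sum_le_sum_abs _ _
    _ ≤ ∑ t, 4 * ε * attackDist u x t := by
        apply Finset.sum_le_sum
        intro t _
        rw [← sub_mul, abs_mul]
        calc |attackDist uh x t - attackDist u x t| * |v t (x t)|
            ≤ (4 * ε * attackDist u x t) * 1 :=
              mul_le_mul (key t) (hvb t) (abs_nonneg _)
                (mul_nonneg (by linarith) (hD0 t))
          _ = 4 * ε * attackDist u x t := mul_one _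
    _ = 4 * ε := by rw [← Finset.mul_sum, hsum1, mul_one]

/-- If the learned attacker utilities `uh` are uniformly within `ε ≤ 1/4` of the true
utilities `u` on `[0,1]`, then any strategy `x'` maximizing the predicted defender
utility is `8ε`-optimal for the true defender utility. -/
theorem predicted_optimal_strategy_near_optimal {T : Type*} [Fintype T] [Nonempty T]
    (u uh : T → ℝ → ℝ) (v : T → ℝ → ℝ)
    (hv : ∀ t, ∀ p ∈ Set.Icc (0:ℝ) 1, v t p ∈ Set.Icc (-1:ℝ) 1)
    (ε : ℝ) (hε0 : 0 ≤ ε) (hε : ε ≤ 1/4)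
    (hu : ∀ t, ∀ p ∈ Set.Icc (0:ℝ) 1, |uh t p - u t p| ≤ ε)
    (x' : T → ℝ) (hx' : ∀ t, x' t ∈ Set.Icc (0:ℝ) 1)
    (hopt : ∀ y : T → ℝ, (∀ t, y t ∈ Set.Icc (0:ℝ) 1) →
      defenderUtil uh v y ≤ defenderUtil uh v x') :
    ∀ y : T → ℝ, (∀ t, y t ∈ Set.Icc (0:ℝ) 1) →
      defenderUtil u v y - defenderUtil u v x' ≤ 8 * ε := by
  intro y hy
  have h1 := abs_le.1 (defenderUtil_close u uh v hv ε hε0 hε hu y hy)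
  have h2 := abs_le.1 (defenderUtil_close u uh v hv ε hε0 hε hu x' hx')
  have h3 := hopt y hy
  linarith
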